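/- Let G be a finite group with trivial center such that the trivial subgroup belongs to the Chermak–Delgado lattice CD(G) (equivalently m*(G) = |G|). Then CD(G) contains no subgroup of prime order. -/

import Mathlib

open Pointwise

/-- Chermak–Delgado measure of a subgroup. -/
noncomputable def mCD (G : Type*) [Group G] (H : Subgroup G) : ℕ :=
  Nat.card H * Nat.card (Subgroup.centralizer (H : Set G))

/-- Maximal Chermak–Delgado measure. -/
noncomputable def mStar (G : Type*) [Group G] : ℕ :=
  sSup (Set.range (mCD G))

/-- Chermak–Delgado lattice (as a set of subgroups). -/
def CD (G : Type*) [Group G] : Set (Subgroup G) :=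
  {H | mCD G H = mStar G}

/-- A group has dense CD-subgroups if for all subgroups H < K with H not
maximal in K, there exists X in CD(G) with H < X < K. -/
def DenseCD (G : Type*) [Group G] : Prop :=
  ∀ H K : Subgroup G, H < K → (∃ L : Subgroup G, H < L ∧ L < K) →
    ∃ X ∈ CD G, H < X ∧ X < K

section Aux

variable {G : Type*} [Group G] [Finite G]

lemma aux_card_pos (K : Subgroup G) : 0 < Nat.card K := Nat.card_pos

lemma aux_centralizer_bot :
    Subgroup.centralizer ((⊥ : Subgroup G) : Set G) = ⊤ := by
  rw [eq_top_iff]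
  intro x _
  rw [Subgroup.mem_centralizer_iff]
  intro h hh
  simp only [Subgroup.coe_bot, Set.mem_singleton_iff] at hh
  subst hh; simp

lemma aux_mStar (hbot : (⊥ : Subgroup G) ∈ CD G) : mStar G = Nat.card G := by
  have h : mCD G ⊥ = Nat.card G := by
    rw [mCD, aux_centralizer_bot, Subgroup.card_bot, Subgroup.card_top, one_mul]
  rw [← hbot, h]

lemma aux_le (K : Subgroup G) : mCD G K ≤ mStar G := by
  have : Finite (Subgroup G) :=
    Finite.of_injective (fun H : Subgroup G => (H : Set G)) SetLike.coe_injective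
  exact le_csSup (Set.finite_range _).bddAbove ⟨K, rfl⟩

lemma aux_centralizer_sup (A B : Subgroup G) :
    Subgroup.centralizer ((A ⊔ B : Subgroup G) : Set G)
      = Subgroup.centralizer (A : Set G) ⊓ Subgroup.centralizer (B : Set G) := by
  apply le_antisymm
  · exact le_inf (Subgroup.centralizer_le (SetLike.coe_subset_coe.mpr le_sup_left))
      (Subgroup.centralizer_le (SetLike.coe_subset_coe.mpr le_sup_right))
  · rintro x hx
    obtain ⟨hxA, hxB⟩ := Subgroup.mem_inf.mp hx
    rw [Subgroup.mem_centralizer_iff]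
    intro h hh
    have hA : A ≤ Subgroup.centralizer {x} := by
      intro a ha
      rw [Subgroup.mem_centralizer_iff]
      intro y hy
      rw [Set.mem_singleton_iff] at hy; subst hy
      exact (Subgroup.mem_centralizer_iff.mp hxA a ha).symm
    have hB : B ≤ Subgroup.centralizer {x} := by
      intro a ha
      rw [Subgroup.mem_centralizer_iff]
      intro y hy
      rw [Set.mem_singleton_iff] at hy; subst hy
      exact (Subgroup.mem_centralizer_iff.mp hxB a ha).symm
    have : h ∈ Subgroup.centralizer {x} := (sup_le hA hB) hh
    exact (Subgroup.mem_centralizer_iff.mp this x (Set.mem_singleton x)).symm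

lemma aux_card_mul_inf (A B : Subgroup G) :
    Nat.card ((A : Set G) * (B : Set G)) * Nat.card (A ⊓ B : Subgroup G)
      = Nat.card A * Nat.card B := by
  have h1 := Subgroup.card_mul_eq_card_subgroup_mul_card_quotient B (A : Set G)
  have h2 : ((↑) '' (A : Set G) : Set (G ⧸ B)) = MulAction.orbit A ((1 : G) : G ⧸ B) := by
    ext z
    constructor
    · rintro ⟨g, hg, rfl⟩
      refine ⟨⟨g, hg⟩, ?_⟩
      show (⟨g, hg⟩ : A) • ((1 : G) : G ⧸ B) = _
      show g • ((1 : G) : G ⧸ B) = _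
      rw [MulAction.Quotient.smul_mk, smul_eq_mul, mul_one]
    · rintro ⟨⟨g, hg⟩, rfl⟩
      refine ⟨g, hg, ?_⟩
      show QuotientGroup.mk g = (⟨g, hg⟩ : A) • ((1 : G) : G ⧸ B)
      show _ = g • ((1 : G) : G ⧸ B)
      rw [MulAction.Quotient.smul_mk, smul_eq_mul, mul_one]
  have h3 : Nat.card (MulAction.orbit A ((1 : G) : G ⧸ B))
      = (MulAction.stabilizer A ((1 : G) : G ⧸ B)).index := by
    rw [Subgroup.index]
    exact Nat.card_congr (MulAction.orbitEquivQuotientStabilizer A _)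
  have h4 : MulAction.stabilizer A ((1 : G) : G ⧸ B) = B.subgroupOf A := by
    ext a
    rw [MulAction.mem_stabilizer_iff, Subgroup.mem_subgroupOf]
    show (a : G) • ((1 : G) : G ⧸ B) = ((1 : G) : G ⧸ B) ↔ _
    rw [MulAction.Quotient.smul_mk, smul_eq_mul, mul_one, QuotientGroup.eq]
    simp
  have h5 : Nat.card (B.subgroupOf A) = Nat.card (A ⊓ B : Subgroup G) := by
    rw [← Subgroup.inf_subgroupOf_right B A]
    have := Nat.card_congr (Subgroup.subgroupOfEquivOfLe
      (inf_le_right : B ⊓ A ≤ A)).toEquiv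
    rw [this, inf_comm]
  have h6 := Subgroup.card_mul_index (B.subgroupOf A)
  -- h6 : Nat.card (B.subgroupOf A) * (B.subgroupOf A).index = Nat.card A
  rw [h2, h3, h4] at h1
  rw [h1, ← h5]
  calc Nat.card B * (B.subgroupOf A).index * Nat.card (B.subgroupOf A)
      = Nat.card B * (Nat.card (B.subgroupOf A) * (B.subgroupOf A).index) := by ring
    _ = Nat.card B * Nat.card A := by rw [h6]
    _ = Nat.card A * Nat.card B := mul_comm _ _

lemma aux_card_smul (a : MulAut G) (S : Subgroup G) :
    Nat.card (a • S : Subgroup G) = Nat.card S := by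
  rw [Subgroup.pointwise_smul_def]
  exact (Nat.card_congr (Subgroup.equivMapOfInjective S _
    (MulAction.injective a)).toEquiv).symm

lemma aux_centralizer_smul_le (a : MulAut G) (S : Subgroup G) :
    a • Subgroup.centralizer (S : Set G)
      ≤ Subgroup.centralizer ((a • S : Subgroup G) : Set G) := by
  intro x hx
  obtain ⟨y, hy, rfl⟩ := (Subgroup.mem_smul_pointwise_iff_exists x a _).mp hx
  rw [Subgroup.mem_centralizer_iff]
  intro h hh
  obtain ⟨s, hs, rfl⟩ := (Subgroup.mem_smul_pointwise_iff_exists h a S).mp hh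
  have hc := Subgroup.mem_centralizer_iff.mp hy s hs
  calc (a • s) * (a • y) = a • (s * y) := (smul_mul' a s y).symm
    _ = a • (y * s) := by rw [hc]
    _ = (a • y) * (a • s) := smul_mul' a y s

lemma aux_centralizer_smul (a : MulAut G) (S : Subgroup G) :
    Subgroup.centralizer ((a • S : Subgroup G) : Set G)
      = a • Subgroup.centralizer (S : Set G) := by
  refine le_antisymm ?_ (aux_centralizer_smul_le a S)
  have h := aux_centralizer_smul_le a⁻¹ (a • S)
  rw [inv_smul_smul] at h
  intro x hx
  have h1 : a⁻¹ • x ∈ a⁻¹ • Subgroup.centralizer ((a • S : Subgroup G) : Set G) :=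
    Subgroup.smul_mem_pointwise_smul _ _ _ hx
  have h2 := h h1
  exact (Subgroup.mem_smul_pointwise_iff_exists x a _).mpr
    ⟨a⁻¹ • x, h2, smul_inv_smul a x⟩

lemma aux_mCD_smul (a : MulAut G) (S : Subgroup G) : mCD G (a • S) = mCD G S := by
  rw [mCD, mCD, aux_card_smul, aux_centralizer_smul, aux_card_smul]

lemma aux_key (hbot : (⊥ : Subgroup G) ∈ CD G) {A B : Subgroup G}
    (hA : A ∈ CD G) (hB : B ∈ CD G) :
    A ⊔ B ∈ CD G ∧
      Nat.card (A ⊔ B : Subgroup G) * Nat.card (A ⊓ B : Subgroup G)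
        = Nat.card A * Nat.card B := by
  have hn := aux_mStar hbot
  set n := Nat.card G with hndef
  set CA := Subgroup.centralizer (A : Set G) with hCA
  set CB := Subgroup.centralizer (B : Set G) with hCB
  have hAe : Nat.card A * Nat.card CA = n := by
    have := hA; rw [CD, Set.mem_setOf_eq, hn] at this; exact this
  have hBe : Nat.card B * Nat.card CB = n := by
    have := hB; rw [CD, Set.mem_setOf_eq, hn] at this; exact this
  set a := Nat.card A
  set b := Nat.card B
  set i := Nat.card (A ⊓ B : Subgroup G) with hidef
  set j := Nat.card (A ⊔ B : Subgroup G) with hjdef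
  set ca := Nat.card CA
  set cb := Nat.card CB
  set ci := Nat.card (Subgroup.centralizer ((A ⊓ B : Subgroup G) : Set G)) with hcidef
  set cj := Nat.card (Subgroup.centralizer ((A ⊔ B : Subgroup G) : Set G)) with hcjdef
  set u := Nat.card ((A : Set G) * (B : Set G)) with hudef
  set v := Nat.card ((CA : Set G) * (CB : Set G)) with hvdef
  have f1 : u * i = a * b := aux_card_mul_inf A B
  have f2 : v * cj = ca * cb := by
    have := aux_card_mul_inf CA CB
    rw [hcjdef, aux_centralizer_sup]
    exact this
  have f3 : u ≤ j := by
    apply Nat.card_mono (Set.toFinite _)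
    rintro x ⟨y, hy, z, hz, rfl⟩
    exact mul_mem (le_sup_left (α := Subgroup G) hy) (le_sup_right (α := Subgroup G) hz)
  have f4 : v ≤ ci := by
    apply Nat.card_mono (Set.toFinite _)
    rintro x ⟨y, hy, z, hz, rfl⟩
    have hy' : y ∈ Subgroup.centralizer ((A ⊓ B : Subgroup G) : Set G) :=
      Subgroup.centralizer_le (SetLike.coe_subset_coe.mpr inf_le_left) hy
    have hz' : z ∈ Subgroup.centralizer ((A ⊓ B : Subgroup G) : Set G) :=
      Subgroup.centralizer_le (SetLike.coe_subset_coe.mpr inf_le_right) hz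
    exact mul_mem hy' hz'
  have f5 : j * cj ≤ n := by rw [← hn]; exact aux_le (A ⊔ B)
  have f6 : i * ci ≤ n := by rw [← hn]; exact aux_le (A ⊓ B)
  have hipos : 0 < i := aux_card_pos _
  have hcjpos : 0 < cj := aux_card_pos _
  have hcipos : 0 < ci := aux_card_pos _
  have hjpos : 0 < j := aux_card_pos _
  have hnpos : 0 < n := by rw [hndef]; exact Nat.card_pos
  have e1 : (u * v) * (i * cj) = n * n := by
    calc (u * v) * (i * cj) = (u * i) * (v * cj) := by ring
      _ = (a * b) * (ca * cb) := by rw [f1, f2]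
      _ = (a * ca) * (b * cb) := by ring
      _ = n * n := by rw [hAe, hBe]
  have le1 : u * v ≤ j * ci := Nat.mul_le_mul f3 f4
  have e2 : (j * ci) * (i * cj) ≤ n * n := by
    calc (j * ci) * (i * cj) = (j * cj) * (i * ci) := by ring
      _ ≤ n * n := Nat.mul_le_mul f5 f6
  have e3 : j * ci = u * v := by
    have h := Nat.le_of_mul_le_mul_right (e1 ▸ e2) (Nat.mul_pos hipos hcjpos)
    exact le_antisymm h le1
  have e4 : (j * cj) * (i * ci) = n * n := by
    calc (j * cj) * (i * ci) = (j * ci) * (i * cj) := by ring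
      _ = (u * v) * (i * cj) := by rw [e3]
      _ = n * n := e1
  have e5 : j * cj = n := by
    by_contra hne
    have hlt : j * cj < n := lt_of_le_of_ne f5 hne
    have : (j * cj) * (i * ci) < n * n :=
      calc (j * cj) * (i * ci) ≤ (j * cj) * n := Nat.mul_le_mul_left _ f6
        _ < n * n := (Nat.mul_lt_mul_right hnpos).mpr hlt
    omega
  have e6 : i * ci = n := by
    have : (j * cj) * (i * ci) = n * (i * ci) := by rw [e5]
    rw [e4] at this
    exact (Nat.eq_of_mul_eq_mul_left hnpos this).symm
  have e7 : u = j := by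
    have h1 : u * v ≤ j * v := Nat.mul_le_mul_right _ f3
    have h2 : j * v ≤ j * ci := Nat.mul_le_mul_left _ f4
    have hvpos : 0 < v := by
      rcases Nat.eq_zero_or_pos v with h | h
      · rw [h, zero_mul] at f2
        have : 0 < ca * cb := Nat.mul_pos (aux_card_pos _) (aux_card_pos _)
        omega
      · exact h
    have : u * v = j * v := le_antisymm h1 (by omega)
    exact Nat.eq_of_mul_eq_mul_right hvpos this
  constructor
  · show mCD G (A ⊔ B) = mStar G
    rw [mCD, hn]
    exact e5
  · rw [← e7]; exact f1

lemma aux_sup_closed (hbot : (⊥ : Subgroup G) ∈ CD G) {p : ℕ} (hp : p.Prime)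
    {A B : Subgroup G} (hA : A ∈ CD G ∧ IsPGroup p A) (hB : B ∈ CD G ∧ IsPGroup p B) :
    (A ⊔ B) ∈ CD G ∧ IsPGroup p (A ⊔ B : Subgroup G) := by
  obtain ⟨hcd, heq⟩ := aux_key hbot hA.1 hB.1
  refine ⟨hcd, ?_⟩
  haveI : Fact p.Prime := ⟨hp⟩
  obtain ⟨k, hk⟩ := IsPGroup.iff_card.mp hA.2
  obtain ⟨l, hl⟩ := IsPGroup.iff_card.mp hB.2
  have hdvd : Nat.card (A ⊔ B : Subgroup G) ∣ p ^ (k + l) := by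
    rw [pow_add, ← hk, ← hl, ← heq]
    exact Dvd.intro _ rfl
  obtain ⟨m, _, hm⟩ := (Nat.dvd_prime_pow hp).mp hdvd
  exact IsPGroup.of_card hm

end Aux

theorem stmt14 (G : Type*) [Group G] [Finite G] (hz : Subgroup.center G = ⊥)
    (hbot : (⊥ : Subgroup G) ∈ CD G) :
    ∀ H ∈ CD G, ¬ (Nat.card H).Prime := by
  intro H hH hp
  classical
  set q := Nat.card H with hpdef
  haveI hfp : Fact q.Prime := ⟨hp⟩
  letI : Fintype G := Fintype.ofFinite G
  set f : G → Subgroup G := fun g => MulAut.conj g • H with hf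
  set P : Subgroup G := Finset.univ.sup f with hPdef
  have hQ : P ∈ CD G ∧ IsPGroup q P := by
    apply Finset.sup_induction (p := fun K => K ∈ CD G ∧ IsPGroup q K)
    · exact ⟨hbot, IsPGroup.of_bot⟩
    · intro A hA B hB
      exact aux_sup_closed hbot hp hA hB
    · intro g _
      constructor
      · show mCD G (MulAut.conj g • H) = mStar G
        rw [aux_mCD_smul]
        exact hH
      · exact IsPGroup.of_card (by rw [aux_card_smul, ← hpdef, pow_one])
  have hHP : H ≤ P := by
    have h1 : f 1 = H := by
      rw [hf]
      simp only [map_one, one_smul]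
    calc H = f 1 := h1.symm
      _ ≤ P := Finset.le_sup (Finset.mem_univ 1)
  have hsmul : ∀ g : G, MulAut.conj g • P = P := by
    have hle : ∀ g : G, P ≤ MulAut.conj g • P := by
      intro g
      apply Finset.sup_le
      intro g' _
      have h1 : f g' = MulAut.conj g • f (g⁻¹ * g') := by
        rw [hf]
        show MulAut.conj g' • H = MulAut.conj g • MulAut.conj (g⁻¹ * g') • H
        rw [smul_smul, ← map_mul, mul_inv_cancel_left]
      rw [h1]
      exact Subgroup.pointwise_smul_le_pointwise_smul_iff.mpr
        (Finset.le_sup (Finset.mem_univ _))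
    intro g
    refine le_antisymm ?_ (hle g)
    calc MulAut.conj g • P ≤ MulAut.conj g • (MulAut.conj g⁻¹ • P) :=
          Subgroup.pointwise_smul_le_pointwise_smul_iff.mpr (hle g⁻¹)
      _ = P := by rw [smul_smul, ← map_mul, mul_inv_cancel, map_one, one_smul]
  haveI hPn : P.Normal := Subgroup.Normal.of_conjugate_fixed hsmul
  set C := Subgroup.centralizer (P : Set G) with hCdef
  haveI hCn : C.Normal := by
    apply Subgroup.Normal.of_conjugate_fixed
    intro g
    rw [hCdef, ← aux_centralizer_smul (MulAut.conj g) P, hsmul g]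
  have hPC : Nat.card P * Nat.card C = Nat.card G := by
    have h1 : mCD G P = mStar G := hQ.1
    rw [mCD, aux_mStar hbot] at h1
    exact h1
  have hCi : C.index = Nat.card P := by
    have h := Subgroup.card_mul_index C
    apply Nat.eq_of_mul_eq_mul_left (aux_card_pos C)
    rw [h, mul_comm (Nat.card C) (Nat.card P)] at *
    omega
  haveI : Finite (Sylow q G) :=
    Finite.of_injective (fun P : Sylow q G => (P : Set G)) SetLike.coe_injective
  obtain ⟨S⟩ : Nonempty (Sylow q G) := inferInstance
  set J := (S : Subgroup G) ⊔ C with hJdef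
  have hJtop : J = ⊤ := by
    have hJC : J.index ∣ C.index := Subgroup.index_dvd_of_le le_sup_right
    have hJS : J.index ∣ (S : Subgroup G).index := Subgroup.index_dvd_of_le le_sup_left
    rw [hCi] at hJC
    obtain ⟨k, hk⟩ := IsPGroup.iff_card.mp hQ.2
    rw [hk] at hJC
    obtain ⟨m, _, hm⟩ := (Nat.dvd_prime_pow hp).mp hJC
    rcases Nat.eq_zero_or_pos m with hm0 | hm0
    · rw [hm0, pow_zero] at hm
      rw [← Subgroup.index_eq_one.mp hm]
    · exfalso
      apply S.not_dvd_index
      have : q ∣ J.index := by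
        rw [hm]
        exact dvd_pow_self q hm0.ne'
      exact this.trans hJS
  -- conjugation action of the Sylow subgroup on P
  letI : MulAction (S : Subgroup G) P :=
    MulAction.compHom _ ((MulAut.conjNormal (H := P)).comp (S : Subgroup G).subtype)
  have hmod := (S.2).card_modEq_card_fixedPoints (α := P)
  have hpP : q ∣ Nat.card P := hpdef ▸ Subgroup.card_dvd_of_le hHP
  have hone : (1 : P) ∈ MulAction.fixedPoints (S : Subgroup G) P := by
    intro s
    show ((MulAut.conjNormal (H := P)).comp (S : Subgroup G).subtype s) • (1 : P) = 1
    simp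
  have hfpdvd : q ∣ Nat.card (MulAction.fixedPoints (S : Subgroup G) P) := by
    have h1 : Nat.card P % q
        = Nat.card (MulAction.fixedPoints (S : Subgroup G) P) % q := hmod
    omega
  have hfppos : 0 < Nat.card (MulAction.fixedPoints (S : Subgroup G) P) :=
    @Nat.card_pos _ ⟨⟨1, hone⟩⟩ _
  have h2p : 2 ≤ Nat.card (MulAction.fixedPoints (S : Subgroup G) P) := by
    have := hp.two_le
    have := Nat.le_of_dvd hfppos hfpdvd
    omega
  obtain ⟨x, hxfix, hx1⟩ :
      ∃ x ∈ MulAction.fixedPoints (S : Subgroup G) P, x ≠ (1 : P) := by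
    by_contra hcon
    push_neg at hcon
    have hsub : MulAction.fixedPoints (S : Subgroup G) P ⊆ {(1 : P)} := by
      intro y hy
      exact hcon y hy
    have := Nat.card_mono (Set.finite_singleton (1 : P)) hsub
    simp only [Nat.card_unique] at this
    omega
  have hcent : Subgroup.centralizer {(x : G)} = ⊤ := by
    rw [eq_top_iff, ← hJtop, hJdef]
    apply sup_le
    · intro s hs
      rw [Subgroup.mem_centralizer_iff]
      intro y hy
      rw [Set.mem_singleton_iff] at hy; subst hy
      have hfix := hxfix ⟨s, hs⟩
      have : ((MulAut.conjNormal (H := P)) s x : G) = (x : G) := by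
        have h1 : ((MulAut.conjNormal (H := P)).comp
            (S : Subgroup G).subtype ⟨s, hs⟩) • x = x := hfix
        exact congrArg Subtype.val h1
      rw [MulAut.conjNormal_apply] at this
      -- this : s * x * s⁻¹ = x
      have h2 : s * (x : G) = (x : G) * s := by
        calc s * (x : G) = (s * (x : G) * s⁻¹) * s := by group
          _ = (x : G) * s := by rw [this]
      exact h2.symm
    · intro c hc
      rw [Subgroup.mem_centralizer_iff]
      intro y hy
      rw [Set.mem_singleton_iff] at hy; subst hy
      exact Subgroup.mem_centralizer_iff.mp hc (x : G) x.2
  have hxc : (x : G) ∈ Subgroup.center G :=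
    Subgroup.centralizer_eq_top_iff_subset.mp hcent (Set.mem_singleton _)
  rw [hz, Subgroup.mem_bot] at hxc
  exact hx1 (Subtype.ext hxc)
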